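/- Let $F$ be a dyadic local field with $e = \mathrm{ord}(2)$. If $a, b \in F^\times$ satisfy $d(a) + d(b) > 2e$, then the Hilbert symbol $(a, b)_{\mathfrak{p}} = 1$. -/

import Mathlib

noncomputable section

/-- A normalized additive `ℤ`-valued valuation presenting `F` as a dyadic local field
(`F` is a finite extension of `ℚ₂` and `ord` its normalized valuation). -/
structure IsDyadicOrd {F : Type*} [Field F] [Algebra ℚ_[2] F] (ord : F → WithTop ℤ) : Prop where
  map_zero : ord 0 = ⊤
  ne_top : ∀ x : F, x ≠ 0 → ord x ≠ ⊤
  map_mul : ∀ x y : F, ord (x * y) = ord x + ord y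
  min_le_add : ∀ x y : F, min (ord x) (ord y) ≤ ord (x + y)
  surj : ∀ n : ℤ, ∃ x : F, ord x = (n : WithTop ℤ)
  compat : ∀ q : ℚ_[2], q ≠ 0 → q.valuation = 0 → ord (algebraMap ℚ_[2] F q) = 0

/-- The order of the relative quadratic defect `d(a) = ord (a⁻¹ 𝔡(a))`, where
`𝔡(a) = ⋂ₓ (a - x²)𝒪` is the quadratic defect; it is valued in `ℕ∞`
(`d(a) ≥ 0` always, and `d(a) = ⊤` iff `𝔡(a) = 0`, i.e. `a` is a square). -/
def ddefect {F : Type*} [Field F] (ord : F → WithTop ℤ) (a : F) : ℕ∞ :=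
  ⨆ x : F, WithTop.map Int.toNat (ord (a⁻¹ * (a - x ^ 2)))

/-- `d(a)` viewed in `WithTop ℤ`. -/
def dz {F : Type*} [Field F] (ord : F → WithTop ℤ) (a : F) : WithTop ℤ :=
  WithTop.map (Nat.cast : ℕ → ℤ) (ddefect ord a)

/-- The Hilbert symbol `(a,b)_𝔭 = 1` iff `z² = a x² + b y²` has a nontrivial solution. -/
def hilbertSym (F : Type*) [Field F] (a b : F) : ℤ :=
  @ite _ (∃ x y z : F, (x, y, z) ≠ (0, 0, 0) ∧ a * x ^ 2 + b * y ^ 2 = z ^ 2)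
    (Classical.propDecidable _) 1 (-1)

namespace IsDyadicOrd

variable {F : Type*} [Field F] [Algebra ℚ_[2] F] {ord : F → WithTop ℤ}
  (hv : IsDyadicOrd ord)

section basic
include hv

lemma eq_top_iff {x : F} : ord x = ⊤ ↔ x = 0 := by
  constructor
  · intro h; by_contra hx; exact hv.ne_top x hx h
  · rintro rfl; exact hv.map_zero

lemma ord_one : ord (1 : F) = 0 := by
  have h1 : ord (1 : F) = ord 1 + ord 1 := by simpa using hv.map_mul 1 1
  have hne : ord (1 : F) ≠ ⊤ := hv.ne_top 1 one_ne_zero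
  lift ord (1 : F) to ℤ using hne with t ht
  have : t = t + t := by exact_mod_cast h1
  have : t = 0 := by omega
  simp [this]

lemma ord_neg (x : F) : ord (-x) = ord x := by
  have hm : ord ((-1 : F) * (-1)) = ord (-1) + ord (-1) := hv.map_mul _ _
  have h1 : ord ((-1 : F) * (-1)) = 0 := by rw [neg_mul_neg, one_mul, hv.ord_one]
  have hne : ord (-1 : F) ≠ ⊤ := hv.ne_top _ (by norm_num)
  have hneg1 : ord (-1 : F) = 0 := by
    lift ord (-1 : F) to ℤ using hne with t ht
    rw [h1] at hm
    have : (0 : ℤ) = t + t := by exact_mod_cast hm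
    have : t = 0 := by omega
    simp [this]
  calc ord (-x) = ord ((-1) * x) := by ring_nf
    _ = ord (-1 : F) + ord x := hv.map_mul _ _
    _ = ord x := by rw [hneg1, zero_add]

lemma ord_sub_rev (x y : F) : ord (x - y) = ord (y - x) := by
  rw [← hv.ord_neg (y - x)]; ring_nf

lemma min_le_sub (x y : F) : min (ord x) (ord y) ≤ ord (x - y) := by
  have h := hv.min_le_add x (-y)
  rw [hv.ord_neg] at h
  rwa [sub_eq_add_neg]

lemma ord_add_of_lt {x y : F} (h : ord x < ord y) : ord (x + y) = ord x := by
  have h1 : ord x ≤ ord (x + y) := by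
    have := hv.min_le_add x y
    rwa [min_eq_left h.le] at this
  rcases h1.lt_or_eq with h2 | h2
  · exfalso
    have h3 : min (ord (x + y)) (ord (-y)) ≤ ord x := by
      simpa using hv.min_le_add (x + y) (-y)
    rw [hv.ord_neg] at h3
    have : ord x < min (ord (x + y)) (ord y) := lt_min h2 h
    exact absurd h3 (not_le.mpr this)
  · exact h2.symm

lemma ord_add_of_ne {x y : F} (h : ord x ≠ ord y) :
    ord (x + y) = min (ord x) (ord y) := by
  rcases h.lt_or_gt with h1 | h1
  · rw [hv.ord_add_of_lt h1, min_eq_left h1.le]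
  · rw [add_comm, hv.ord_add_of_lt h1, min_eq_right h1.le]

lemma ord_inv {x : F} (hx : x ≠ 0) {m : ℤ} (hm : ord x = (m : WithTop ℤ)) :
    ord x⁻¹ = ((-m : ℤ) : WithTop ℤ) := by
  have h1 : ord (x * x⁻¹) = 0 := by rw [mul_inv_cancel₀ hx, hv.ord_one]
  rw [hv.map_mul, hm] at h1
  have hne : ord x⁻¹ ≠ ⊤ := hv.ne_top _ (inv_ne_zero hx)
  lift ord x⁻¹ to ℤ using hne with t ht
  have : m + t = 0 := by exact_mod_cast h1
  have : t = -m := by omega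
  exact_mod_cast this

lemma ord_pow {x : F} {m : ℤ} (hm : ord x = (m : WithTop ℤ)) (k : ℕ) :
    ord (x ^ k) = ((k * m : ℤ) : WithTop ℤ) := by
  induction k with
  | zero => simpa using hv.ord_one
  | succ n ih =>
      rw [pow_succ, hv.map_mul, ih, hm, ← WithTop.coe_add]
      congr 1
      push_cast
      ring

lemma ord_zpow {x : F} (hx : x ≠ 0) {m : ℤ} (hm : ord x = (m : WithTop ℤ)) (k : ℤ) :
    ord (x ^ k) = ((k * m : ℤ) : WithTop ℤ) := by
  rcases le_or_gt 0 k with h | h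
  · lift k to ℕ using h
    rw [zpow_natCast]
    exact_mod_cast hv.ord_pow hm k
  · have h0 : ord (x ^ k * x ^ (-k)) = 0 := by
      rw [← zpow_add₀ hx]; simpa using hv.ord_one
    have h2 : ord (x ^ (-k)) = (((-k) * m : ℤ) : WithTop ℤ) := by
      have : (0:ℤ) ≤ -k := by omega
      lift (-k) to ℕ using this with n hn
      rw [zpow_natCast]
      exact_mod_cast hv.ord_pow hm n
    rw [hv.map_mul, h2] at h0
    have hne : ord (x ^ k) ≠ ⊤ := hv.ne_top _ (zpow_ne_zero _ hx)
    lift ord (x ^ k) to ℤ using hne with t ht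
    have : t + (-k) * m = 0 := by exact_mod_cast h0
    have : t = k * m := by linarith
    exact_mod_cast this

lemma ord_sum {ι : Type*} (s : Finset ι) (f : ι → F) (w : ι → ℤ)
    (hw : ∀ i ∈ s, ord (f i) = (w i : WithTop ℤ))
    (hinj : ∀ i ∈ s, ∀ j ∈ s, w i = w j → i = j) (hs : s.Nonempty) :
    ∃ i ∈ s, ord (∑ j ∈ s, f j) = (w i : WithTop ℤ) := by
  induction s using Finset.cons_induction with
  | empty => exact absurd hs (by simp)
  | cons a t hat ih =>
      rcases t.eq_empty_or_nonempty with rfl | htne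
      · exact ⟨a, by simp, by simpa using hw a (by simp)⟩
      · obtain ⟨i0, hi0, hord0⟩ := ih (fun i hi => hw i (Finset.mem_cons_of_mem hi))
          (fun i hi j hj hij => hinj i (Finset.mem_cons_of_mem hi) j (Finset.mem_cons_of_mem hj) hij) htne
        have hwa : ord (f a) = (w a : WithTop ℤ) := hw a (Finset.mem_cons_self a t)
        have hne : ord (f a) ≠ ord (∑ j ∈ t, f j) := by
          rw [hwa, hord0]
          intro hcontra
          have : w a = w i0 := by exact_mod_cast hcontra
          exact hat (hinj a (Finset.mem_cons_self a t) i0 (Finset.mem_cons_of_mem hi0) this ▸ hi0)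
        rw [Finset.sum_cons]
        rw [hv.ord_add_of_ne hne]
        rcases min_cases (ord (f a)) (ord (∑ j ∈ t, f j)) with ⟨hmin, _⟩ | ⟨hmin, _⟩
        · exact ⟨a, Finset.mem_cons_self a t, by rw [hmin, hwa]⟩
        · exact ⟨i0, Finset.mem_cons_of_mem hi0, by rw [hmin, hord0]⟩

end basic

section withe
variable (e : ℕ) (he : ord (2 : F) = ((e : ℤ) : WithTop ℤ))
include hv he

lemma ord_algebraMap : ∀ q : ℚ_[2], q ≠ 0 →
    ord (algebraMap ℚ_[2] F q) = ((q.valuation * e : ℤ) : WithTop ℤ) := by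
  intro q hq
  set v := q.valuation
  have h2 : (2 : ℚ_[2]) ≠ 0 := two_ne_zero
  have hval2 : ∀ k : ℕ, ((2 : ℚ_[2]) ^ (k:ℕ)).valuation = k := by
    intro k
    induction k with
    | zero => simpa using Padic.valuation_one
    | succ n ih =>
        rw [pow_succ, Padic.valuation_mul (pow_ne_zero _ h2) h2, ih]
        have : (2 : ℚ_[2]).valuation = 1 := by
          have := Padic.valuation_p (p := 2)
          simpa using this
        rw [this]; push_cast; ring
  have hvalz : ∀ k : ℤ, ((2 : ℚ_[2]) ^ (k:ℤ)).valuation = k := by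
    intro k
    rcases le_or_gt 0 k with h | h
    · lift k to ℕ using h; rw [zpow_natCast]; exact_mod_cast hval2 k
    · have h1 : ((2:ℚ_[2]) ^ k * (2:ℚ_[2]) ^ (-k)).valuation = 0 := by
        rw [← zpow_add₀ h2]; simpa using Padic.valuation_one
      rw [Padic.valuation_mul (zpow_ne_zero _ h2) (zpow_ne_zero _ h2)] at h1
      have h3 : ((2:ℚ_[2]) ^ (-k)).valuation = -k := by
        have : (0:ℤ) ≤ -k := by omega
        lift (-k) to ℕ using this with n hn
        rw [zpow_natCast]; exact_mod_cast hval2 n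
      omega
  set u := q / (2:ℚ_[2]) ^ (v:ℤ) with hu
  have hpne : ((2:ℚ_[2]) ^ (v:ℤ)) ≠ 0 := zpow_ne_zero _ h2
  have hune : u ≠ 0 := div_ne_zero hq hpne
  have hq' : q = u * (2:ℚ_[2]) ^ (v:ℤ) := (div_mul_cancel₀ q hpne).symm
  have huval : u.valuation = 0 := by
    have h4 := Padic.valuation_mul hune hpne
    rw [← hq', hvalz] at h4
    omega
  have h2F : (2 : F) ≠ 0 := by
    intro h0
    rw [h0, hv.map_zero] at he
    simp at he
  have hmap : algebraMap ℚ_[2] F q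
      = algebraMap ℚ_[2] F u * (algebraMap ℚ_[2] F 2) ^ (v:ℤ) := by
    rw [hq', (algebraMap ℚ_[2] F).map_mul, ← map_zpow₀ (algebraMap ℚ_[2] F)]
  have halg2 : algebraMap ℚ_[2] F 2 = (2 : F) := map_ofNat _ 2
  rw [hmap, hv.map_mul, hv.compat u hune huval, zero_add, halg2,
    hv.ord_zpow h2F he v]


lemma one_le_e [FiniteDimensional ℚ_[2] F] : 1 ≤ e := by
  by_contra hcon
  have he0 : e = 0 := by omega
  subst he0
  set n := Module.finrank ℚ_[2] F with hn
  have hx : ∀ i : Fin (n+1), ∃ x : F, ord x = ((i : ℤ) : WithTop ℤ) :=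
    fun i => hv.surj (i : ℤ)
  choose x hxord using hx
  have hli : ¬ LinearIndependent ℚ_[2] x := by
    intro hind
    have := hind.fintype_card_le_finrank
    simp [Fintype.card_fin] at this
    omega
  obtain ⟨g, hsum, i0, hg0⟩ := Fintype.not_linearIndependent_iff.mp hli
  classical
  set s : Finset (Fin (n+1)) := Finset.univ.filter (fun i => g i ≠ 0) with hs
  have hsne : s.Nonempty := ⟨i0, by simp [hs, hg0]⟩
  have hsum2 : ∑ i ∈ s, g i • x i = 0 := by
    rw [hs, Finset.sum_filter_of_ne, hsum]
    intro i _ hne hgz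
    exact hne (by rw [hgz, zero_smul])
  have hordterm : ∀ i ∈ s, ord (g i • x i) = (((i:ℕ):ℤ) : WithTop ℤ) := by
    intro i hi
    have hgi : g i ≠ 0 := by
      rw [hs] at hi; simpa using hi
    rw [Algebra.smul_def, hv.map_mul, hv.ord_algebraMap 0 he (g i) hgi, hxord i]
    rw [← WithTop.coe_add]
    congr 1
    push_cast
    ring
  obtain ⟨i, hi, hordsum⟩ := hv.ord_sum s (fun i => g i • x i) (fun i => ((i:ℕ):ℤ))
    hordterm (fun i _ j _ hij => by
      exact Fin.val_injective (by exact_mod_cast hij)) hsne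
  rw [hsum2, hv.map_zero] at hordsum
  exact WithTop.top_ne_coe hordsum

end withe



end IsDyadicOrd

namespace IsDyadicOrd

variable {F : Type*} [Field F] [Algebra ℚ_[2] F] {ord : F → WithTop ℤ}

/-- The base of the norm. -/
def rho (e : ℕ) : ℝ := (2:ℝ) ^ (-(e:ℝ)⁻¹)

lemma rho_pos (e : ℕ) : 0 < rho e := Real.rpow_pos_of_pos two_pos _

lemma rho_ne_zero (e : ℕ) : rho e ≠ 0 := (rho_pos e).ne'

lemma rho_lt_one {e : ℕ} (hE : 1 ≤ e) : rho e < 1 := by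
  apply Real.rpow_lt_one_of_one_lt_of_neg one_lt_two
  have h0 : (0:ℝ) < (e:ℝ) := by exact_mod_cast hE
  have : (0:ℝ) < (e:ℝ)⁻¹ := by positivity
  linarith

lemma rho_pow_e {e : ℕ} (hE : 1 ≤ e) : (rho e) ^ (e:ℕ) = 2⁻¹ := by
  rw [rho, ← Real.rpow_natCast ((2:ℝ) ^ (-(e:ℝ)⁻¹)) e, ← Real.rpow_mul (by norm_num)]
  have hne : (e:ℝ) ≠ 0 := by
    have : (0:ℝ) < (e:ℝ) := by exact_mod_cast hE
    exact this.ne'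
  rw [show (-(e:ℝ)⁻¹ * e) = -1 by field_simp]
  rw [Real.rpow_neg_one]

open scoped Classical in
/-- The norm associated to `ord`. -/
def ONorm (ord : F → WithTop ℤ) (e : ℕ) (x : F) : ℝ :=
  if x = 0 then 0 else (rho e) ^ ((ord x).untopD 0)

variable (hv : IsDyadicOrd ord) {e : ℕ}

lemma onorm_zero : ONorm ord e 0 = 0 := by simp [ONorm]

include hv

lemma exists_ord_int {x : F} (hx : x ≠ 0) : ∃ m : ℤ, ord x = (m : WithTop ℤ) := by
  obtain ⟨m, hm⟩ := WithTop.ne_top_iff_exists.mp (hv.ne_top x hx)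
  exact ⟨m, hm.symm⟩

lemma onorm_of_ord {x : F} (hx : x ≠ 0) {m : ℤ} (hm : ord x = (m : WithTop ℤ)) :
    ONorm ord e x = (rho e) ^ m := by
  rw [ONorm, if_neg hx, hm, WithTop.untopD_coe]

lemma onorm_nonneg (x : F) : 0 ≤ ONorm ord e x := by
  by_cases hx : x = 0
  · simp [hx, onorm_zero]
  · obtain ⟨m, hm⟩ := hv.exists_ord_int hx
    rw [hv.onorm_of_ord hx hm]
    exact (zpow_pos (rho_pos e) m).le

lemma onorm_pos {x : F} (hx : x ≠ 0) : 0 < ONorm ord e x := by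
  obtain ⟨m, hm⟩ := hv.exists_ord_int hx
  rw [hv.onorm_of_ord hx hm]
  exact zpow_pos (rho_pos e) m

lemma onorm_eq_zero {x : F} : ONorm ord e x = 0 ↔ x = 0 := by
  constructor
  · intro h
    by_contra hx
    exact (hv.onorm_pos hx).ne' h
  · rintro rfl; exact onorm_zero

lemma onorm_mul (x y : F) : ONorm ord e (x * y) = ONorm ord e x * ONorm ord e y := by
  by_cases hx : x = 0
  · simp [hx, onorm_zero]
  by_cases hy : y = 0
  · simp [hy, onorm_zero]
  obtain ⟨mx, hmx⟩ := hv.exists_ord_int hx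
  obtain ⟨my, hmy⟩ := hv.exists_ord_int hy
  have hxy : ord (x * y) = ((mx + my : ℤ) : WithTop ℤ) := by
    rw [hv.map_mul, hmx, hmy, ← WithTop.coe_add]
  rw [hv.onorm_of_ord (mul_ne_zero hx hy) hxy, hv.onorm_of_ord hx hmx,
    hv.onorm_of_ord hy hmy, zpow_add₀ (rho_ne_zero e)]

lemma onorm_le_of_ord_le (hE : 1 ≤ e) {x y : F} (hxy : ord y ≤ ord x) :
    ONorm ord e x ≤ ONorm ord e y := by
  by_cases hx : x = 0
  · rw [hx, onorm_zero]; exact hv.onorm_nonneg y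
  have hy : y ≠ 0 := by
    intro hy0
    rw [hy0, hv.map_zero, top_le_iff] at hxy
    exact hv.ne_top x hx hxy
  obtain ⟨mx, hmx⟩ := hv.exists_ord_int hx
  obtain ⟨my, hmy⟩ := hv.exists_ord_int hy
  rw [hv.onorm_of_ord hx hmx, hv.onorm_of_ord hy hmy]
  apply zpow_le_zpow_right_of_le_one₀ (rho_pos e) (rho_lt_one hE).le
  rw [hmx, hmy] at hxy
  exact_mod_cast hxy

lemma onorm_add_le_max (hE : 1 ≤ e) (x y : F) :
    ONorm ord e (x + y) ≤ max (ONorm ord e x) (ONorm ord e y) := by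
  rcases le_total (ord x) (ord y) with hle | hle
  · have h1 : ord x ≤ ord (x + y) := le_trans (by simp [hle]) (hv.min_le_add x y)
    exact le_max_of_le_left (hv.onorm_le_of_ord_le hE h1)
  · have h1 : ord y ≤ ord (x + y) := le_trans (by simp [hle]) (hv.min_le_add x y)
    exact le_max_of_le_right (hv.onorm_le_of_ord_le hE h1)

lemma onorm_le_zpow_iff (hE : 1 ≤ e) {x : F} (hx : x ≠ 0) (n : ℤ) :
    ONorm ord e x ≤ (rho e) ^ n ↔ ((n:ℤ) : WithTop ℤ) ≤ ord x := by
  obtain ⟨m, hm⟩ := hv.exists_ord_int hx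
  rw [hv.onorm_of_ord hx hm, hm]
  rw [zpow_le_zpow_iff_right_of_lt_one₀ (rho_pos e) (rho_lt_one hE)]
  exact ⟨fun h => by exact_mod_cast h, fun h => by exact_mod_cast h⟩

/-- The absolute value on `F` induced by `ord`. -/
def oabs (hv : IsDyadicOrd ord) (e : ℕ) (hE : 1 ≤ e) : AbsoluteValue F ℝ where
  toFun := ONorm ord e
  map_mul' := hv.onorm_mul
  nonneg' := hv.onorm_nonneg
  eq_zero' := fun x => hv.onorm_eq_zero
  add_le' := fun x y => by
    refine le_trans (hv.onorm_add_le_max hE x y) ?_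
    apply max_le
    · have := hv.onorm_nonneg (e := e) y; linarith
    · have := hv.onorm_nonneg (e := e) x; linarith

lemma onorm_algebraMap (he : ord (2 : F) = ((e : ℤ) : WithTop ℤ)) (hE : 1 ≤ e)
    (q : ℚ_[2]) : ONorm ord e (algebraMap ℚ_[2] F q) = ‖q‖ := by
  by_cases hq : q = 0
  · simp [hq, onorm_zero]
  have halg : algebraMap ℚ_[2] F q ≠ 0 := by
    simp only [ne_eq, map_eq_zero]; exact hq
  rw [hv.onorm_of_ord halg (hv.ord_algebraMap e he q hq)]
  rw [Padic.norm_eq_zpow_neg_valuation hq]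
  have h1 : (rho e) ^ (q.valuation * (e:ℤ)) = ((rho e) ^ (e:ℤ)) ^ q.valuation := by
    rw [← zpow_mul]; ring_nf
  rw [h1]
  have h2 : (rho e) ^ (e:ℤ) = 2⁻¹ := by
    rw [zpow_natCast]; exact rho_pow_e hE
  rw [h2]
  have : ((2:ℕ):ℝ) = (2:ℝ) := by norm_num
  rw [this, inv_zpow, ← zpow_neg]

end IsDyadicOrd

namespace IsDyadicOrd

section sqrt
variable {F : Type*} [Field F] [Algebra ℚ_[2] F] [FiniteDimensional ℚ_[2] F]
  {ord : F → WithTop ℤ} (hv : IsDyadicOrd ord) {e : ℕ}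
  (he : ord (2 : F) = ((e : ℤ) : WithTop ℤ)) (hE : 1 ≤ e)
include hv he hE

lemma exists_fixed (δ : F) (hδ : ((1:ℤ) : WithTop ℤ) ≤ ord δ) :
    ∃ t : F, t + t ^ 2 = δ := by
  letI NF : NormedField F := (hv.oabs e hE).toNormedField
  have hnorm : ∀ x : F, ‖x‖ = ONorm ord e x := fun x => rfl
  letI NS : NormedSpace ℚ_[2] F :=
    { norm_smul_le := by
        intro q x
        rw [Algebra.smul_def, hnorm, hv.onorm_mul, hv.onorm_algebraMap he hE, ← hnorm]
        } 
  haveI : CompleteSpace F := FiniteDimensional.complete ℚ_[2] F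
  set ρ : ℝ := rho e with hρdef
  have hρpos : 0 < ρ := rho_pos e
  have hρlt : ρ < 1 := rho_lt_one hE
  have hnorm_le : ∀ x : F, ((1:ℤ) : WithTop ℤ) ≤ ord x → ‖x‖ ≤ ρ := by
    intro x hx
    by_cases h0 : x = 0
    · rw [h0, hnorm, onorm_zero]; exact hρpos.le
    · rw [hnorm]
      have := (hv.onorm_le_zpow_iff hE h0 1).mpr hx
      rwa [zpow_one] at this
  have hle_ord : ∀ x : F, x ≠ 0 → ‖x‖ ≤ ρ → ((1:ℤ) : WithTop ℤ) ≤ ord x := by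
    intro x hx h
    have := (hv.onorm_le_zpow_iff hE hx 1).mp (by rwa [zpow_one, ← hnorm])
    exact this
  set B : Set F := Metric.closedBall (0:F) ρ with hB
  have hmem : ∀ x : F, x ∈ B ↔ ‖x‖ ≤ ρ := by
    intro x; rw [hB, Metric.mem_closedBall, dist_zero_right]
  have hmax : ∀ x y : F, ‖x + y‖ ≤ max ‖x‖ ‖y‖ := by
    intro x y
    rw [hnorm, hnorm, hnorm]
    exact hv.onorm_add_le_max hE x y
  have hf_mem : ∀ t : F, t ∈ B → δ - t ^ 2 ∈ B := by
    intro t ht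
    rw [hmem] at ht ⊢
    have h1 : ‖δ - t ^ 2‖ ≤ max ‖δ‖ ‖t ^ 2‖ := by
      have := hmax δ (-(t^2))
      rwa [norm_neg, ← sub_eq_add_neg] at this
    refine le_trans h1 (max_le (hnorm_le δ hδ) ?_)
    have : ‖t ^ 2‖ = ‖t‖ * ‖t‖ := by rw [pow_two, norm_mul]
    rw [this]
    calc ‖t‖ * ‖t‖ ≤ ρ * 1 := by
          apply mul_le_mul ht (le_trans ht hρlt.le) (norm_nonneg t) hρpos.le
      _ = ρ := mul_one ρ
  set f : B → B := fun t => ⟨δ - (t:F) ^ 2, hf_mem t t.2⟩ with hf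
  have hK : (⟨ρ, hρpos.le⟩ : NNReal) < 1 := by
    exact NNReal.coe_lt_coe.mp hρlt
  have hlip : LipschitzWith ⟨ρ, hρpos.le⟩ f := by
    apply LipschitzWith.of_dist_le_mul
    intro t u
    rw [Subtype.dist_eq, hf]
    simp only
    have hval : (δ - (t:F)^2) - (δ - (u:F)^2) = ((u:F) + (t:F)) * ((u:F) - (t:F)) := by ring
    rw [dist_eq_norm, hval, norm_mul]
    have h1 : ‖(u:F) + (t:F)‖ ≤ ρ := by
      refine le_trans (hmax u t) (max_le ?_ ?_)
      · exact (hmem _).mp u.2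
      · exact (hmem _).mp t.2
    have h2 : ‖(u:F) - (t:F)‖ = dist (t:F) (u:F) := by
      rw [dist_eq_norm, norm_sub_rev]
    rw [h2, ← Subtype.dist_eq]
    exact mul_le_mul_of_nonneg_right h1 dist_nonneg
  have hcontr : ContractingWith ⟨ρ, hρpos.le⟩ f := ⟨hK, hlip⟩
  haveI : Nonempty B := ⟨⟨0, by rw [hmem, norm_zero]; exact hρpos.le⟩⟩
  haveI : CompleteSpace B := Metric.isClosed_closedBall.completeSpace_coe
  obtain ht := hcontr.fixedPoint_isFixedPt
  set t := ContractingWith.fixedPoint f hcontr with htdef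
  have heq : δ - ((t:F)) ^ 2 = (t:F) := congrArg Subtype.val ht
  exact ⟨(t:F), by linear_combination -heq⟩

lemma exists_sqrt {ε : F} (hε : ((2 * e + 1 : ℤ) : WithTop ℤ) ≤ ord ε) :
    ∃ γ : F, γ ^ 2 = 1 + ε := by
  have h2F : (2 : F) ≠ 0 := by
    intro h0
    rw [h0, hv.map_zero] at he
    simp at he
  have h4 : (4 : F) ≠ 0 := by
    have : (4:F) = 2 * 2 := by norm_num
    rw [this]; exact mul_ne_zero h2F h2F
  have hord4 : ord (4 : F) = ((2 * e : ℤ) : WithTop ℤ) := by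
    have : (4:F) = 2 * 2 := by norm_num
    rw [this, hv.map_mul, he, ← WithTop.coe_add]
    congr 1
    ring
  set δ : F := ε / 4 with hδdef
  have hεδ : ε = 4 * δ := by rw [hδdef]; field_simp
  have hδ : ((1:ℤ) : WithTop ℤ) ≤ ord δ := by
    have h1 : ord ε = ((2*e : ℤ) : WithTop ℤ) + ord δ := by
      rw [hεδ, hv.map_mul, hord4]
    rw [h1] at hε
    have h2 : ((2 * e + 1 : ℤ) : WithTop ℤ)
        = ((2*e : ℤ) : WithTop ℤ) + ((1:ℤ) : WithTop ℤ) := by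
      rw [← WithTop.coe_add]
    rw [h2] at hε
    exact (WithTop.add_le_add_iff_left (WithTop.coe_ne_top)).mp hε
  obtain ⟨t, ht⟩ := hv.exists_fixed he hE δ hδ
  refine ⟨1 + 2 * t, ?_⟩
  have : (1 + 2*t)^2 = 1 + 4 * (t + t^2) := by ring
  rw [this, ht, ← hεδ]

end sqrt

end IsDyadicOrd

namespace IsDyadicOrd

section extract
variable {F : Type*} [Field F] [Algebra ℚ_[2] F] [FiniteDimensional ℚ_[2] F]
  {ord : F → WithTop ℤ} (hv : IsDyadicOrd ord) {e : ℕ}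
  (he : ord (2 : F) = ((e : ℤ) : WithTop ℤ)) (hE : 1 ≤ e)
include hv

lemma normalize (c : F) (hc : c ≠ 0) (n : ℕ) (hn : (n : ℕ∞) < ddefect ord c) :
    (∃ t : F, c = t ^ 2) ∨
    (∃ u α : F, u ≠ 0 ∧ α ≠ 0 ∧ c = u ^ 2 * (1 + α) ∧
      ∃ m : ℤ, ord α = (m : WithTop ℤ) ∧ (n : ℤ) < m) := by
  rw [ddefect] at hn
  obtain ⟨x, hx⟩ := lt_iSup_iff.mp hn
  by_cases hcx : c - x ^ 2 = 0
  · exact Or.inl ⟨x, sub_eq_zero.mp hcx⟩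
  right
  set α' : F := c⁻¹ * (c - x ^ 2) with hα'def
  have hα'ne : α' ≠ 0 := mul_ne_zero (inv_ne_zero hc) hcx
  obtain ⟨m, hm⟩ := hv.exists_ord_int hα'ne
  rw [hm, WithTop.map_coe] at hx
  have hmn : (n : ℤ) < m ∧ 1 ≤ m := by
    have h1 : n < m.toNat := by
      rw [show WithTop.some (Int.toNat m) = ((Int.toNat m : ℕ) : ℕ∞) from rfl] at hx
      exact_mod_cast hx
    omega
  have hxne : x ≠ 0 := by
    intro h0
    have : α' = 1 := by
      rw [hα'def, h0]
      field_simp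
      ring
    rw [this, hv.ord_one] at hm
    have : (0:ℤ) = m := by exact_mod_cast hm
    omega
  have hord1m : ord (1 - α') = ((0:ℤ) : WithTop ℤ) := by
    have hne : ord (1:F) ≠ ord (-α') := by
      rw [hv.ord_neg, hv.ord_one, hm]
      intro hcon
      have : (0:ℤ) = m := by exact_mod_cast hcon
      omega
    have := hv.ord_add_of_ne hne
    rw [hv.ord_neg, hv.ord_one, hm, ← sub_eq_add_neg] at this
    rw [this]
    have : (0:ℤ) ≤ m := by omega
    simp [min_eq_left, WithTop.coe_le_coe, this]
  have h1mne : (1 - α') ≠ 0 := by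
    intro h0
    rw [h0, hv.map_zero] at hord1m
    simp at hord1m
  set α : F := α' / (1 - α') with hαdef
  have hαne : α ≠ 0 := div_ne_zero hα'ne h1mne
  have hx2 : x ^ 2 = c * (1 - α') := by
    rw [hα'def]
    field_simp
    ring
  have hceq : c = x ^ 2 * (1 + α) := by
    rw [hαdef, hx2]
    field_simp
    ring
  have hordα : ord α = (m : WithTop ℤ) := by
    rw [hαdef, div_eq_mul_inv, hv.map_mul, hm, hv.ord_inv h1mne hord1m]
    simp
  exact ⟨x, α, hxne, hαne, hceq, m, hordα, hmn.1⟩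

include he hE

lemma sq_of_big (c : F) (hc : c ≠ 0) (hbig : (2 * e : ℕ∞) < ddefect ord c) :
    ∃ t : F, c = t ^ 2 := by
  have hbig' : ((2 * e : ℕ) : ℕ∞) < ddefect ord c := by
    convert hbig using 2
    push_cast
    rfl
  rcases hv.normalize c hc (2 * e) hbig' with h | ⟨u, α, hu, hαne, hceq, m, hordα, hmlt⟩
  · exact h
  have hsq : ∃ γ : F, γ ^ 2 = 1 + α := by
    apply hv.exists_sqrt he hE
    rw [hordα, WithTop.coe_le_coe]
    push_cast at hmlt ⊢
    omega
  obtain ⟨γ, hγ⟩ := hsq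
  exact ⟨u * γ, by rw [hceq, ← hγ]; ring⟩

end extract
end IsDyadicOrd


/-- if `d(a) + d(b) > 2e` then `(a,b)_ℙ = 1`. -/
theorem stmt3 {F : Type*} [Field F] [Algebra ℚ_[2] F] [FiniteDimensional ℚ_[2] F]
    (ord : F → WithTop ℤ) (hv : IsDyadicOrd ord)
    (e : ℕ) (he : ord (2 : F) = ((e : ℤ) : WithTop ℤ))
    (a b : F) (ha : a ≠ 0) (hb : b ≠ 0)
    (h : (2 * e : ℕ∞) < ddefect ord a + ddefect ord b) :
    hilbertSym F a b = 1 := by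
  have hE : 1 ≤ e := hv.one_le_e e he
  suffices hsol : ∃ x y z : F, (x, y, z) ≠ (0, 0, 0) ∧ a * x ^ 2 + b * y ^ 2 = z ^ 2 by
    rw [hilbertSym, if_pos hsol]
  by_cases hda : (2 * e : ℕ∞) < ddefect ord a
  · obtain ⟨t, ht⟩ := hv.sq_of_big he hE a ha hda
    exact ⟨1, 0, t, by simp, by rw [ht]; ring⟩
  by_cases hdb : (2 * e : ℕ∞) < ddefect ord b
  · obtain ⟨t, ht⟩ := hv.sq_of_big he hE b hb hdb
    exact ⟨0, 1, t, by simp, by rw [ht]; ring⟩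
  push_neg at hda hdb
  have h2e : (2 * e : ℕ∞) = ((2 * e : ℕ) : ℕ∞) := by norm_cast
  rw [h2e] at hda hdb h
  obtain ⟨na, hna⟩ := WithTop.ne_top_iff_exists.mp
    ((hda.trans_lt (WithTop.coe_lt_top _)).ne)
  obtain ⟨nb, hnb⟩ := WithTop.ne_top_iff_exists.mp
    ((hdb.trans_lt (WithTop.coe_lt_top _)).ne)
  have hna' : ddefect ord a = ((na : ℕ) : ℕ∞) := hna.symm
  have hnb' : ddefect ord b = ((nb : ℕ) : ℕ∞) := hnb.symm
  have hsumlt : 2 * e < na + nb := by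
    rw [hna', hnb'] at h
    exact_mod_cast h
  have hnale : na ≤ 2 * e := by
    rw [hna'] at hda
    exact_mod_cast hda
  have hnble : nb ≤ 2 * e := by
    rw [hnb'] at hdb
    exact_mod_cast hdb
  have hna1 : 1 ≤ na := by omega
  have hnb1 : 1 ≤ nb := by omega
  have hltna : ((na - 1 : ℕ) : ℕ∞) < ddefect ord a := by
    rw [hna']
    exact_mod_cast Nat.sub_lt hna1 one_pos
  have hltnb : ((nb - 1 : ℕ) : ℕ∞) < ddefect ord b := by
    rw [hnb']
    exact_mod_cast Nat.sub_lt hnb1 one_pos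
  rcases hv.normalize a ha (na - 1) hltna with ⟨t, ht⟩ |
    ⟨u, α, hu, hαne, haeq, mα, hordα, hmαlt⟩
  · exact ⟨1, 0, t, by simp, by rw [ht]; ring⟩
  rcases hv.normalize b hb (nb - 1) hltnb with ⟨t, ht⟩ |
    ⟨w, β, hw, hβne, hbeq, mβ, hordβ, hmβlt⟩
  · exact ⟨0, 1, t, by simp, by rw [ht]; ring⟩
  have hmαge : (na : ℤ) ≤ mα := by omega
  have hmβge : (nb : ℤ) ≤ mβ := by omega
  obtain ⟨γ, hγ⟩ := hv.exists_sqrt he hE (ε := -(α * β)) (by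
    rw [hv.ord_neg, hv.map_mul, hordα, hordβ, ← WithTop.coe_add, WithTop.coe_le_coe]
    omega)
  have hγ' : γ ^ 2 = 1 - α * β := by rw [hγ]; ring
  set s : F := (1 + γ) / β with hsdef
  have h1 : β * s = 1 + γ := by
    rw [hsdef]
    field_simp
  have h2 : β * s ^ 2 = 2 * s - α := by
    apply mul_left_cancel₀ hβne
    calc β * (β * s ^ 2) = (β * s) ^ 2 := by ring
      _ = (1 + γ) ^ 2 := by rw [h1]
      _ = 2 * (1 + γ) - α * β + (γ ^ 2 - (1 - α * β)) := by ring
      _ = 2 * (β * s) - α * β := by rw [hγ', h1]; ring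
      _ = β * (2 * s - α) := by ring
  refine ⟨u⁻¹, s * w⁻¹, 1 + s, ?_, ?_⟩
  · intro hcon
    exact inv_ne_zero hu (congrArg Prod.fst hcon)
  · have e1 : a * (u⁻¹) ^ 2 = 1 + α := by
      rw [haeq]
      field_simp
    have e2 : b * (s * w⁻¹) ^ 2 = (1 + β) * s ^ 2 := by
      rw [hbeq]
      field_simp
    rw [e1, e2]
    linear_combination h2
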